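/- arXiv:2009.12427 — 2 statements merged into one kernel-verified Lean document; each statement's English description precedes it below -/
import Mathlib

section
/- Let R > 0 and let L₁, L₂, L₃, L₄ be the four explicit closed line segments in ℝ³ defined in the context. If 0 < r < R/(4√(5 + 2√2)), then the four closed tubes Nᵢ = {x ∈ ℝ³ : d(x, Lᵢ) ≤ √2·r}, for i = 1, …, 4, are pairwise disjoint. -/
set_option maxHeartbeats 1000000
set_option linter.unusedSectionVars false

noncomputable section

/-- ℝ³ with the Euclidean metric. -/
abbrev E3 := EuclideanSpace ℝ (Fin 3)

/-- The closed segment `{p + t • v : 0 ≤ t ≤ √2 R}`. -/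
def seg (p v : E3) (R : ℝ) : Set E3 :=
  {x | ∃ t : ℝ, 0 ≤ t ∧ t ≤ Real.sqrt 2 * R ∧ x = p + t • v}

/-- The four segments `L₁, L₂, L₃, L₄` (indexed by `Fin 4`). -/
def L (R : ℝ) : Fin 4 → Set E3
  | 0 => seg !₂[3 * Real.sqrt 2 * R / 4, 0, 0]
        !₂[-1, Real.sqrt (2 + Real.sqrt 2) / 2, Real.sqrt (2 - Real.sqrt 2) / 2] R
  | 1 => seg !₂[5 * Real.sqrt 2 * R / 4, 0, 0]
        !₂[-1, -(Real.sqrt (2 + Real.sqrt 2) / 2), Real.sqrt (2 - Real.sqrt 2) / 2] R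
  | 2 => seg !₂[0, Real.sqrt 2 * R / 4, 0]
        !₂[-(Real.sqrt (2 - Real.sqrt 2) / 2), -1, Real.sqrt (2 + Real.sqrt 2) / 2] R
  | 3 => seg !₂[0, -(Real.sqrt 2 * R / 4), 0]
        !₂[Real.sqrt (2 - Real.sqrt 2) / 2, 1, Real.sqrt (2 + Real.sqrt 2) / 2] R

/-- The closed tube of radius `√2 r` around the segment `L R i`. -/
def tube (R r : ℝ) (i : Fin 4) : Set E3 :=
  {x | Metric.infDist x (L R i) ≤ Real.sqrt 2 * r}

lemma dist_sq_E3 (y z : E3) : dist y z ^ 2 = (y 0 - z 0)^2 + (y 1 - z 1)^2 + (y 2 - z 2)^2 := by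
  rw [EuclideanSpace.dist_eq, Real.sq_sqrt (by positivity)]
  simp [Fin.sum_univ_three, Real.dist_eq, sq_abs]

lemma dist_sq_seg (p v q w : E3) (t s : ℝ) :
    dist (p + t • v) (q + s • w) ^ 2 =
      (p 0 + t * v 0 - (q 0 + s * w 0))^2 + (p 1 + t * v 1 - (q 1 + s * w 1))^2
        + (p 2 + t * v 2 - (q 2 + s * w 2))^2 := by
  rw [dist_sq_E3]; simp [PiLp.add_apply, PiLp.smul_apply, smul_eq_mul]

lemma seg_compact (p v : E3) (R : ℝ) : IsCompact (seg p v R) := by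
  have h : seg p v R = (fun t : ℝ => p + t • v) '' Set.Icc 0 (Real.sqrt 2 * R) := by
    ext x
    simp only [seg, Set.mem_setOf_eq, Set.mem_image, Set.mem_Icc]
    constructor
    · rintro ⟨t, h1, h2, h3⟩; exact ⟨t, ⟨h1, h2⟩, h3.symm⟩
    · rintro ⟨t, ⟨h1, h2⟩, h3⟩; exact ⟨t, h1, h2, h3.symm⟩
  rw [h]
  exact isCompact_Icc.image (continuous_const.add (continuous_id.smul continuous_const))

lemma seg_nonempty (p v : E3) (R : ℝ) (hR : 0 < R) : (seg p v R).Nonempty :=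
  ⟨p, 0, le_refl 0, by positivity, by simp⟩

lemma L_compact (R : ℝ) (i : Fin 4) : IsCompact (L R i) := by
  fin_cases i <;> exact seg_compact _ _ _

lemma L_nonempty (R : ℝ) (hR : 0 < R) (i : Fin 4) : (L R i).Nonempty := by
  fin_cases i <;> exact seg_nonempty _ _ _ hR

/-- A line-line distance bound via Cauchy–Schwarz against a common normal. -/
lemma pair_generic (n1 n2 n3 X Y Z c R κ : ℝ)
    (hdot : n1*X + n2*Y + n3*Z = κ*R)
    (hν : 0 < n1^2 + n2^2 + n3^2)
    (hconst : n1^2 + n2^2 + n3^2 ≤ (10+4*c) * κ^2) :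
    R^2 ≤ (10+4*c) * (X^2 + Y^2 + Z^2) := by
  have hCS : (κ*R)^2 ≤ (n1^2+n2^2+n3^2) * (X^2+Y^2+Z^2) := by
    rw [← hdot]
    nlinarith [sq_nonneg (n1*Y-n2*X), sq_nonneg (n1*Z-n3*X), sq_nonneg (n2*Z-n3*Y)]
  have h10 : 0 < 10+4*c := by nlinarith [sq_nonneg κ]
  have key : (n1^2+n2^2+n3^2) * R^2 ≤ (n1^2+n2^2+n3^2) * ((10+4*c)*(X^2+Y^2+Z^2)) := by
    have h1 := mul_le_mul_of_nonneg_left hCS h10.le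
    have h2 := mul_le_mul_of_nonneg_right hconst (sq_nonneg R)
    nlinarith [h1, h2]
  exact le_of_mul_le_mul_left key hν

section Pairs

lemma sq_ge_one_of_ge {x : ℝ} (h : 1 ≤ x) : 1 ≤ x^2 := by nlinarith
lemma sq_ge_one_of_le {x : ℝ} (h : x ≤ -1) : 1 ≤ x^2 := by nlinarith
lemma sq_ge_of_ge {x : ℝ} (h : (0.85:ℝ) ≤ x) : (0.7225:ℝ) ≤ x^2 := by nlinarith

lemma final_combine {v x c M : ℝ} (h1 : M ≤ x^2) (hM : 0 ≤ M)
    (h2 : v ≤ (10+4*1.41)*M) (hc1 : 1.41 < c) : v ≤ (10+4*c)*x^2 := by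
  nlinarith [h1, hM, h2, hc1]

lemma prod_bounds {c A B : ℝ}
    (hc1 : 1.41 < c) (hc2 : c < 1.42) (hA1 : 1.84 < A) (hA2 : A < 1.85)
    (hB1 : 0.76 < B) (hB2 : B < 0.77) :
    1.0716 < c*B ∧ c*B < 1.0934 ∧ 2.5944 < c*A ∧ c*A < 2.627 :=
  ⟨by nlinarith, by nlinarith, by nlinarith, by nlinarith⟩

variable (c A B R t s : ℝ) (hc : c^2 = 2)
  (hA : A^2 = 2 + c) (hB : B^2 = 2 - c) (hAB : A*B = c)
  (hc1 : 1.41 < c) (hc2 : c < 1.42) (hA1 : 1.84 < A) (hA2 : A < 1.85)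
  (hB1 : 0.76 < B) (hB2 : B < 0.77)

include hc hA hB hAB hc1 hc2 hA1 hA2 hB1 hB2

lemma pair01 : R^2 ≤ (10+4*c) *
    ((s - t - c*R/2)^2 + ((t+s)*(A/2))^2 + ((t-s)*(B/2))^2) := by
  have hc4 : c^4 = 4 := by linear_combination (c^2+2)*hc
  have hc5 : c^5 = 4*c := by linear_combination (c^3+2*c)*hc
  apply pair_generic (A*B/2) 0 A _ _ _ c R (-(A*B*c/4))
  · ring
  · rw [hAB]; linarith [hc, hA, hc1]
  · rw [hAB]; linarith [hc, hA, hc4, hc5]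

lemma pair23 : R^2 ≤ (10+4*c) *
    ((-((t+s)*(B/2)))^2 + (c*R/2 - t - s)^2 + ((t-s)*(A/2))^2) := by
  have hc4 : c^4 = 4 := by linear_combination (c^2+2)*hc
  have hc5 : c^5 = 4*c := by linear_combination (c^3+2*c)*hc
  apply pair_generic (-A) (A*B/2) 0 _ _ _ c R (A*B*c/4)
  · ring
  · rw [hAB]; linarith [hc, hA, hc1]
  · rw [hAB]; linarith [hc, hA, hc4, hc5]

lemma pair02 : R^2 ≤ (10+4*c) *
    ((3*c*R/4 - t + s*(B/2))^2 + (t*(A/2) - c*R/4 + s)^2 + (t*(B/2) - s*(A/2))^2) := by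
  obtain ⟨hp1, hp2, hp3, hp4⟩ := prod_bounds hc1 hc2 hA1 hA2 hB1 hB2
  apply pair_generic (A^2/4+B/2) (-(B^2)/4+A/2) (1+A*B/4) _ _ _ c R
      ((A^2/4+B/2)*(3*c/4) + (-(B^2)/4+A/2)*(-(c/4)))
  · ring
  · rw [hA, hB, hAB]
    linarith [hc, hc1, sq_nonneg ((2+c)/4+B/2), sq_nonneg (-(2-c)/4+A/2)]
  · rw [hA, hB, hAB]
    set x := ((2+c)/4+B/2)*(3*c/4) + (-(2-c)/4+A/2)*(-(c/4)) with hx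
    have h1 : 1 ≤ x := by rw [hx]; linarith [hp1, hp2, hp3, hp4, hc, hc1]
    have h1' := sq_ge_one_of_ge h1
    have h2 : ((2+c)/4+B/2)^2 + (-(2-c)/4+A/2)^2 + (1+c/4)^2 ≤ 14 := by
      linarith [hc, hA, hB, hp1, hp2, hp3, hp4, hc1, hc2, hA1, hA2, hB1, hB2]
    exact final_combine h1' (by norm_num) (by linarith) hc1

lemma pair03 : R^2 ≤ (10+4*c) *
    ((3*c*R/4 - t - s*(B/2))^2 + (t*(A/2) + c*R/4 - s)^2 + (t*(B/2) - s*(A/2))^2) := by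
  obtain ⟨hp1, hp2, hp3, hp4⟩ := prod_bounds hc1 hc2 hA1 hA2 hB1 hB2
  apply pair_generic (A^2/4-B/2) (B^2/4+A/2) (-1-A*B/4) _ _ _ c R
      ((A^2/4-B/2)*(3*c/4) + (B^2/4+A/2)*(c/4))
  · ring
  · rw [hA, hB, hAB]
    linarith [hc, hc1, sq_nonneg ((2+c)/4-B/2), sq_nonneg ((2-c)/4+A/2)]
  · rw [hA, hB, hAB]
    set x := ((2+c)/4-B/2)*(3*c/4) + ((2-c)/4+A/2)*(c/4) with hx
    have h1 : (0.85:ℝ) ≤ x := by rw [hx]; linarith [hp1, hp2, hp3, hp4, hc, hc1]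
    have h1' := sq_ge_of_ge h1
    have h2 : ((2+c)/4-B/2)^2 + ((2-c)/4+A/2)^2 + (-1-c/4)^2 ≤ 10 := by
      linarith [hc, hA, hB, hp1, hp2, hp3, hp4, hc1, hc2, hA1, hA2, hB1, hB2]
    exact final_combine h1' (by norm_num) (by linarith) hc1

lemma pair12 : R^2 ≤ (10+4*c) *
    ((5*c*R/4 - t + s*(B/2))^2 + (-(t*(A/2)) - c*R/4 + s)^2 + (t*(B/2) - s*(A/2))^2) := by
  obtain ⟨hp1, hp2, hp3, hp4⟩ := prod_bounds hc1 hc2 hA1 hA2 hB1 hB2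
  apply pair_generic (-(A^2)/4+B/2) (-(B^2)/4+A/2) (1-A*B/4) _ _ _ c R
      ((-(A^2)/4+B/2)*(5*c/4) + (-(B^2)/4+A/2)*(-(c/4)))
  · ring
  · rw [hA, hB, hAB]
    linarith [hc, hc2, sq_nonneg (-(2+c)/4+B/2), sq_nonneg (-(2-c)/4+A/2)]
  · rw [hA, hB, hAB]
    set x := (-(2+c)/4+B/2)*(5*c/4) + (-(2-c)/4+A/2)*(-(c/4)) with hx
    have h1 : x ≤ -1 := by rw [hx]; linarith [hp1, hp2, hp3, hp4, hc, hc1]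
    have h1' := sq_ge_one_of_le h1
    have h2 : (-(2+c)/4+B/2)^2 + (-(2-c)/4+A/2)^2 + (1-c/4)^2 ≤ 14 := by
      linarith [hc, hA, hB, hp1, hp2, hp3, hp4, hc1, hc2, hA1, hA2, hB1, hB2]
    exact final_combine h1' (by norm_num) (by linarith) hc1

lemma pair13 : R^2 ≤ (10+4*c) *
    ((5*c*R/4 - t - s*(B/2))^2 + (-(t*(A/2)) + c*R/4 - s)^2 + (t*(B/2) - s*(A/2))^2) := by
  obtain ⟨hp1, hp2, hp3, hp4⟩ := prod_bounds hc1 hc2 hA1 hA2 hB1 hB2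
  apply pair_generic (-(A^2)/4-B/2) (B^2/4+A/2) (-1+A*B/4) _ _ _ c R
      ((-(A^2)/4-B/2)*(5*c/4) + (B^2/4+A/2)*(c/4))
  · ring
  · rw [hA, hB, hAB]
    linarith [hc, hc2, sq_nonneg (-(2+c)/4-B/2), sq_nonneg ((2-c)/4+A/2)]
  · rw [hA, hB, hAB]
    set x := (-(2+c)/4-B/2)*(5*c/4) + ((2-c)/4+A/2)*(c/4) with hx
    have h1 : x ≤ -1 := by rw [hx]; linarith [hp1, hp2, hp3, hp4, hc, hc1]
    have h1' := sq_ge_one_of_le h1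
    have h2 : (-(2+c)/4-B/2)^2 + ((2-c)/4+A/2)^2 + (-1+c/4)^2 ≤ 14 := by
      linarith [hc, hA, hB, hp1, hp2, hp3, hp4, hc1, hc2, hA1, hA2, hB1, hB2]
    exact final_combine h1' (by norm_num) (by linarith) hc1

end Pairs

/-- Any two points on distinct segments are at distance at least `R/√(10+4√2)`. -/
lemma key_dist (R : ℝ) (i j : Fin 4) (hij : i ≠ j) (y z : E3)
    (hy : y ∈ L R i) (hz : z ∈ L R j) :
    R^2 ≤ (10 + 4*Real.sqrt 2) * dist y z ^ 2 := by
  set c := Real.sqrt 2 with hcdef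
  set A := Real.sqrt (2 + Real.sqrt 2) with hAdef
  set B := Real.sqrt (2 - Real.sqrt 2) with hBdef
  have hc : c^2 = 2 := Real.sq_sqrt (by norm_num)
  have hc0 : 0 ≤ c := Real.sqrt_nonneg 2
  have hc1 : 1.41 < c := by nlinarith
  have hc2 : c < 1.42 := by nlinarith
  have hA : A^2 = 2 + c := Real.sq_sqrt (by positivity)
  have hA0 : 0 ≤ A := Real.sqrt_nonneg _
  have hA1 : 1.84 < A := by nlinarith
  have hA2 : A < 1.85 := by nlinarith
  have hB : B^2 = 2 - c := Real.sq_sqrt (by nlinarith)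
  have hB0 : 0 ≤ B := Real.sqrt_nonneg _
  have hB1 : 0.76 < B := by nlinarith
  have hB2 : B < 0.77 := by nlinarith
  have hAB : A*B = c := by
    rw [hAdef, hBdef, ← Real.sqrt_mul (by positivity)]
    rw [show (2 + Real.sqrt 2) * (2 - Real.sqrt 2) = 2 by nlinarith [hc]]
  fin_cases i <;> fin_cases j <;> (try exact absurd rfl hij)
  all_goals
    simp only [L, seg, Set.mem_setOf_eq] at hy hz
  all_goals
    obtain ⟨t, ht, ht', rfl⟩ := hy
  all_goals
    obtain ⟨u, hu, hu', rfl⟩ := hz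
  all_goals
    rw [dist_sq_seg]
  all_goals
    simp only [PiLp.toLp_apply, Matrix.cons_val_zero, Matrix.cons_val_one, Matrix.head_cons, Matrix.cons_val_two,
      Matrix.tail_cons]
  -- (0,1)
  · linarith [pair01 c A B R t u hc hA hB hAB hc1 hc2 hA1 hA2 hB1 hB2]
  -- (0,2)
  · linarith [pair02 c A B R t u hc hA hB hAB hc1 hc2 hA1 hA2 hB1 hB2]
  -- (0,3)
  · linarith [pair03 c A B R t u hc hA hB hAB hc1 hc2 hA1 hA2 hB1 hB2]
  -- (1,0)
  · linarith [pair01 c A B R u t hc hA hB hAB hc1 hc2 hA1 hA2 hB1 hB2]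
  -- (1,2)
  · linarith [pair12 c A B R t u hc hA hB hAB hc1 hc2 hA1 hA2 hB1 hB2]
  -- (1,3)
  · linarith [pair13 c A B R t u hc hA hB hAB hc1 hc2 hA1 hA2 hB1 hB2]
  -- (2,0)
  · linarith [pair02 c A B R u t hc hA hB hAB hc1 hc2 hA1 hA2 hB1 hB2]
  -- (2,1)
  · linarith [pair12 c A B R u t hc hA hB hAB hc1 hc2 hA1 hA2 hB1 hB2]
  -- (2,3)
  · linarith [pair23 c A B R t u hc hA hB hAB hc1 hc2 hA1 hA2 hB1 hB2]
  -- (3,0)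
  · linarith [pair03 c A B R u t hc hA hB hAB hc1 hc2 hA1 hA2 hB1 hB2]
  -- (3,1)
  · linarith [pair13 c A B R u t hc hA hB hAB hc1 hc2 hA1 hA2 hB1 hB2]
  -- (3,2)
  · linarith [pair23 c A B R u t hc hA hB hAB hc1 hc2 hA1 hA2 hB1 hB2]

theorem tubes_pairwise_disjoint (R r : ℝ) (hR : 0 < R) (hr : 0 < r)
    (hrR : r < R / (4 * Real.sqrt (5 + 2 * Real.sqrt 2))) :
    ∀ i j : Fin 4, i ≠ j → Disjoint (tube R r i) (tube R r j) := by
  intro i j hij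
  rw [Set.disjoint_left]
  intro x hxi hxj
  simp only [tube, Set.mem_setOf_eq] at hxi hxj
  obtain ⟨y, hyL, hy⟩ := (L_compact R i).exists_infDist_eq_dist (L_nonempty R hR i) x
  obtain ⟨z, hzL, hz⟩ := (L_compact R j).exists_infDist_eq_dist (L_nonempty R hR j) x
  have hxy : dist x y ≤ Real.sqrt 2 * r := hy ▸ hxi
  have hxz : dist x z ≤ Real.sqrt 2 * r := hz ▸ hxj
  have hyz : dist y z ≤ 2 * (Real.sqrt 2 * r) := by
    calc dist y z ≤ dist y x + dist x z := dist_triangle y x z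
    _ = dist x y + dist x z := by rw [dist_comm]
    _ ≤ 2 * (Real.sqrt 2 * r) := by linarith
  have hkey := key_dist R i j hij y z hyL hzL
  set c := Real.sqrt 2 with hcdef
  set S := Real.sqrt (5 + 2 * Real.sqrt 2) with hSdef
  have hc : c^2 = 2 := Real.sq_sqrt (by norm_num)
  have hc0 : 0 ≤ c := Real.sqrt_nonneg 2
  have hS : S^2 = 5 + 2*c := by
    rw [hSdef]; exact Real.sq_sqrt (by positivity)
  have hS0 : 0 < S := Real.sqrt_pos.2 (by positivity)
  have h1 : r * (4*S) < R := by
    have h4 : (0:ℝ) < 4*S := by positivity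
    exact (lt_div_iff₀ h4).1 hrR
  have h2 : (r*(4*S))^2 < R^2 := by
    have h0 : 0 ≤ r * (4*S) := by positivity
    nlinarith [h1, h0]
  have h2' : 80*r^2 + 32*c*r^2 < R^2 := by nlinarith [h2, hS, sq_nonneg r]
  have h3 : dist y z ^2 ≤ 8*r^2 := by
    have h5 : (2*(c*r))^2 = 8*r^2 := by linear_combination 4*r^2*hc
    nlinarith [hyz, dist_nonneg (x := y) (y := z), h5]
  have h6 : (0:ℝ) ≤ 10 + 4*c := by linarith
  nlinarith [hkey, h2', h3, h6]
end
end

section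
/- Let h : ℝ³ → ℝ³ be a homeomorphism and set γ₁ = h(C₁) and γ₂ = h(C₂), so that (γ₁, γ₂) forms a Hopf link. Let D² = {z ∈ ℝ² : |z| ≤ 1} and let g : D² → ℝ³ be any continuous map satisfying g(cos s, sin s) = h(cos s, sin s, 0) for all s ∈ ℝ (so g restricted to ∂D² parametrizes γ₁). Then g(D²) ∩ γ₂ ≠ ∅; i.e., every (possibly singular) disk spanning one component of a Hopf link must intersect the other component. -/
noncomputable section

/-- ℝ² with the Euclidean metric. -/
abbrev E2 := EuclideanSpace ℝ (Fin 2)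

/-- The standard round unit circle in the x₁x₂-plane. -/
def C1 : Set E3 := {x | ∃ s : ℝ, x = ![Real.cos s, Real.sin s, 0]}

/-- The standard Hopf partner circle. -/
def C2 : Set E3 := {x | ∃ s : ℝ, x = ![1 + Real.cos s, 0, Real.sin s]}

/-- The closed unit disk `D² ⊆ ℝ²`. -/
def D2 : Set E2 := Metric.closedBall 0 1

open Complex Set

/-! ### Auxiliary elementary lemmas -/

lemma HL.sin_lip (u v : ℝ) : |Real.sin u - Real.sin v| ≤ |u - v| := by
  rw [Real.sin_sub_sin]
  have h1 : |Real.sin ((u - v)/2)| ≤ |(u - v)/2| := Real.abs_sin_le_abs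
  have h2 : |Real.cos ((u + v)/2)| ≤ 1 := Real.abs_cos_le_one _
  rw [abs_mul, abs_mul]
  have h3 : |(u-v)/2| = |u - v|/2 := by rw [abs_div]; norm_num
  calc |(2:ℝ)| * |Real.sin ((u - v)/2)| * |Real.cos ((u+v)/2)|
      ≤ |(2:ℝ)| * |(u-v)/2| * 1 := by
        apply mul_le_mul (mul_le_mul le_rfl h1 (abs_nonneg _) (abs_nonneg _)) h2 (abs_nonneg _)
        positivity
    _ = |u - v| := by rw [h3]; norm_num; linarith [abs_nonneg (u - v)]

lemma HL.cos_lip (u v : ℝ) : |Real.cos u - Real.cos v| ≤ |u - v| := by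
  rw [Real.cos_sub_cos]
  have h1 : |Real.sin ((u - v)/2)| ≤ |(u - v)/2| := Real.abs_sin_le_abs
  have h2 : |Real.sin ((u + v)/2)| ≤ 1 := Real.abs_sin_le_one _
  rw [abs_mul, abs_mul]
  have h3 : |(u-v)/2| = |u - v|/2 := by rw [abs_div]; norm_num
  calc |(-2:ℝ)| * |Real.sin ((u + v)/2)| * |Real.sin ((u-v)/2)|
      ≤ |(-2:ℝ)| * 1 * |(u-v)/2| := by
        apply mul_le_mul (mul_le_mul le_rfl h2 (abs_nonneg _) (abs_nonneg _)) h1 (abs_nonneg _)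
        positivity
    _ = |u - v| := by rw [h3]; norm_num; linarith [abs_nonneg (u - v)]

lemma HL.min_lip (s x y : ℝ) : |min s x - min s y| ≤ |x - y| := by
  rcases le_total s x with h1 | h1 <;> rcases le_total s y with h2 | h2 <;>
    simp [min_eq_left, min_eq_right, h1, h2] <;>
    · rw [abs_le]
      constructor <;> linarith [le_abs_self (x - y), neg_abs_le (x - y), abs_nonneg (x - y)]

/-- A complex number close to a nonzero one has ratio in the slit plane. -/
lemma HL.ratio_facts (z w : ℂ) (hw : w ≠ 0) (hlt : ‖z - w‖ < ‖w‖) :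
    z / w ∈ Complex.slitPlane ∧ z / w ≠ 0 := by
  have hr : ‖z / w - 1‖ < 1 := by
    rw [show z / w - 1 = (z - w) / w by field_simp]
    rw [norm_div, div_lt_one (norm_pos_iff.mpr hw)]
    exact hlt
  constructor
  · left
    have := Complex.abs_re_le_norm (z / w - 1)
    have h2 : |(z/w).re - 1| < 1 := by simpa using this.trans_lt hr
    linarith [(abs_lt.1 h2).1]
  · intro h0
    rw [h0] at hr
    simp at hr

/-- Two continuous logarithms of the same function have the same increment. -/
lemma HL.exp_lift_unique (b : ℝ) (hb : 0 ≤ b) (L₁ L₂ : ℝ → ℂ)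
    (h₁ : Continuous L₁) (h₂ : Continuous L₂)
    (he : ∀ s ∈ Icc 0 b, Complex.exp (L₁ s) = Complex.exp (L₂ s)) :
    L₁ b - L₁ 0 = L₂ b - L₂ 0 := by
  set d : ℝ → ℂ := fun s => L₁ s - L₂ s with hd
  have hdc : Continuous d := h₁.sub h₂
  have hint : ∀ s ∈ Icc 0 b, ∃ n : ℤ, d s = n * (2 * Real.pi * I) := by
    intro s hs
    rw [← Complex.exp_eq_one_iff, hd]
    simp only
    rw [Complex.exp_sub, he s hs, div_self (Complex.exp_ne_zero _)]
  have him : ∀ s ∈ Icc 0 b, ∃ n : ℤ, (d s).re = 0 ∧ (d s).im = n * (2 * Real.pi) := by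
    intro s hs
    obtain ⟨n, hn⟩ := hint s hs
    refine ⟨n, ?_, ?_⟩ <;> rw [hn] <;> simp [Complex.mul_re, Complex.mul_im]
  set u : ℝ → ℝ := fun s => (d s).im with hu
  have huc : Continuous u := Complex.continuous_im.comp hdc
  have hb0 : (0:ℝ) ∈ Icc 0 b := ⟨le_refl 0, hb⟩
  have hbb : b ∈ Icc 0 b := ⟨hb, le_refl b⟩
  obtain ⟨n0, hre0, him0⟩ := him 0 hb0
  obtain ⟨nb, hreb, himb⟩ := him b hbb
  have hpi : (0:ℝ) < Real.pi := Real.pi_pos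
  have key : u b = u 0 := by
    by_contra hne
    have habs : ∀ x ∈ Icc (0:ℝ) b, ∀ m : ℤ, u x ≠ m * (2 * Real.pi) + Real.pi := by
      intro x hx m hxm
      obtain ⟨k, _, hk⟩ := him x hx
      rw [hu] at hxm
      have : (k:ℝ) * (2 * Real.pi) = m * (2 * Real.pi) + Real.pi := by
        rw [← hk]; exact hxm
      have h2 : ((2*k : ℤ) : ℝ) = ((2*m+1 : ℤ) : ℝ) := by push_cast; nlinarith [hpi]
      have := Int.cast_injective (α := ℝ) h2
      omega
    rcases lt_or_gt_of_ne hne with hlt | hlt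
    · have hmem : u b + Real.pi ∈ Icc (u b) (u 0) := by
        constructor
        · linarith
        · have : n0*(2*Real.pi) > nb*(2*Real.pi) := by rw [← him0, ← himb]; exact hlt
          have hnlt : nb < n0 := by
            by_contra hcon
            push_neg at hcon
            have : (n0:ℝ) ≤ nb := by exact_mod_cast hcon
            nlinarith
          have : (nb:ℝ) + 1 ≤ n0 := by exact_mod_cast hnlt
          show (d b).im + Real.pi ≤ (d 0).im
          rw [him0, himb]; nlinarith
      obtain ⟨x, hx, hux⟩ := intermediate_value_Icc' hb huc.continuousOn hmem
      exact habs x hx nb (by rw [hux]; show (d b).im + Real.pi = _; rw [himb])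
    · have hmem : u 0 + Real.pi ∈ Icc (u 0) (u b) := by
        constructor
        · linarith
        · have : n0*(2*Real.pi) < nb*(2*Real.pi) := by rw [← him0, ← himb]; exact hlt
          have hnlt : n0 < nb := by
            by_contra hcon
            push_neg at hcon
            have : (nb:ℝ) ≤ n0 := by exact_mod_cast hcon
            nlinarith
          have : (n0:ℝ) + 1 ≤ nb := by exact_mod_cast hnlt
          show (d 0).im + Real.pi ≤ (d b).im
          rw [him0, himb]; nlinarith
      obtain ⟨x, hx, hux⟩ := intermediate_value_Icc hb huc.continuousOn hmem
      exact habs x hx n0 (by rw [hux]; show (d 0).im + Real.pi = _; rw [him0])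
  have hdd : d b = d 0 := by
    apply Complex.ext
    · rw [hreb, hre0]
    · exact key
  have hdb : L₁ b - L₂ b = L₁ 0 - L₂ 0 := hdd
  linear_combination hdb

/-- Existence of a continuous logarithm of a uniformly nonvanishing,
uniformly continuous function, on `[0, b]`. -/
lemma HL.exists_exp_lift (f : ℝ → ℂ) (hf : Continuous f) (c δ b : ℝ)
    (hc : 0 < c) (hδ : 0 < δ) (hb : 0 ≤ b)
    (hfc : ∀ s, c ≤ ‖f s‖)
    (hmod : ∀ u v : ℝ, |u - v| ≤ δ → ‖f u - f v‖ < c) :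
    ∃ L : ℝ → ℂ, Continuous L ∧ ∀ s ∈ Icc 0 b, Complex.exp (L s) = f s := by
  have hne : ∀ s, f s ≠ 0 := fun s => by
    intro h0; have := hfc s; rw [h0] at this; simp at this; linarith
  obtain ⟨n', hn'⟩ := exists_nat_gt (b / δ)
  set n : ℕ := n' + 1 with hn
  have hnpos : (0:ℝ) < n := by positivity
  set η : ℝ := b / n with hη
  have hη0 : 0 ≤ η := by positivity
  have hηδ : η ≤ δ := by
    rw [hη, div_le_iff₀ hnpos]
    have h1 : b / δ < n := hn'.trans_le (by exact_mod_cast Nat.le_succ n')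
    have h2 : (b/δ)*δ = b := div_mul_cancel₀ b hδ.ne'
    nlinarith [h1, h2, hδ]
  have hr : ∀ s : ℝ, ∀ k : ℕ,
      ‖f (min s ((k+1:ℕ)*η)) - f (min s ((k:ℕ)*η))‖ < c := by
    intro s k
    apply hmod
    have := HL.min_lip s ((k+1:ℕ)*η) ((k:ℕ)*η)
    refine this.trans ?_
    have : ((k+1:ℕ):ℝ)*η - ((k:ℕ):ℝ)*η = η := by push_cast; ring
    rw [this, _root_.abs_of_nonneg hη0]
    exact hηδ
  have hrs : ∀ s : ℝ, ∀ k : ℕ,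
      f (min s ((k+1:ℕ)*η)) / f (min s ((k:ℕ)*η)) ∈ Complex.slitPlane ∧
      f (min s ((k+1:ℕ)*η)) / f (min s ((k:ℕ)*η)) ≠ 0 :=
    fun s k => HL.ratio_facts _ _ (hne _) ((hr s k).trans_le (hfc _))
  refine ⟨fun s => Complex.log (f 0) +
      ∑ k ∈ Finset.range n, Complex.log
        (f (min s ((k+1:ℕ)*η)) / f (min s ((k:ℕ)*η))), ?_, ?_⟩
  · apply continuous_const.add
    apply continuous_finset_sum
    intro k _
    rw [continuous_iff_continuousAt]
    intro s
    have hcontr : Continuous fun a : ℝ =>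
        f (min a ((k+1:ℕ)*η)) / f (min a ((k:ℕ)*η)) :=
      (hf.comp (continuous_id.min continuous_const)).div
        (hf.comp (continuous_id.min continuous_const)) (fun a => hne _)
    show ContinuousAt (Complex.log ∘ fun a : ℝ =>
        f (min a ((k+1:ℕ)*η)) / f (min a ((k:ℕ)*η))) s
    exact ContinuousAt.comp (continuousAt_clog (hrs s k).1) hcontr.continuousAt
  · intro s hs
    obtain ⟨hs0, hsb⟩ := hs
    have key : ∀ m : ℕ, m ≤ n →
        Complex.exp (Complex.log (f 0) +
          ∑ k ∈ Finset.range m, Complex.log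
            (f (min s ((k+1:ℕ)*η)) / f (min s ((k:ℕ)*η)))) = f (min s ((m:ℕ)*η)) := by
      intro m hm
      induction m with
      | zero => simp [Complex.exp_log (hne 0), min_eq_right hs0]
      | succ m ih =>
        rw [Finset.sum_range_succ, ← add_assoc, Complex.exp_add,
          ih (Nat.le_of_succ_le hm), Complex.exp_log (hrs s m).2]
        rw [mul_comm]
        exact div_mul_cancel₀ _ (hne _)
    have hkey := key n le_rfl
    rw [hkey]
    congr 1
    have hnη : (n:ℝ) * η = b := by rw [hη]; field_simp
    rw [hnη, min_eq_left hsb]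

/-! ### The complement map of `C2` and geometry of the disk -/

/-- A continuous map `ℝ³ → ℂ` vanishing exactly on `C2`, measuring the
angle around `C2`. -/
def Fmap : E3 → ℂ := fun x =>
  ↑(Real.sqrt ((x 0 - 1)^2 + (x 2)^2) - 1) + (x 1 : ℝ) * Complex.I

lemma Fmap_cont : Continuous Fmap := by
  unfold Fmap
  have h0 : Continuous fun x : E3 => x 0 := PiLp.continuous_apply 2 _ 0
  have h1 : Continuous fun x : E3 => x 1 := PiLp.continuous_apply 2 _ 1
  have h2 : Continuous fun x : E3 => x 2 := PiLp.continuous_apply 2 _ 2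
  fun_prop

lemma Fmap_ne_zero {x : E3} (hx : x ∉ C2) : Fmap x ≠ 0 := by
  intro h0
  apply hx
  unfold Fmap at h0
  rw [Complex.ext_iff] at h0
  simp only [Complex.add_re, Complex.ofReal_re, Complex.mul_re, Complex.ofReal_im,
    Complex.I_re, Complex.I_im, Complex.add_im, Complex.mul_im, Complex.zero_re,
    Complex.zero_im] at h0
  obtain ⟨ha, hb⟩ := h0
  have hre : Real.sqrt ((x 0 - 1)^2 + (x 2)^2) = 1 := by linarith
  have him : x 1 = 0 := by linarith
  have hsq : (x 0 - 1)^2 + (x 2)^2 = 1 := by rwa [Real.sqrt_eq_one] at hre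
  set z : ℂ := ↑(x 0 - 1) + ↑(x 2) * Complex.I with hz
  have habs : ‖z‖ = 1 := by
    rw [hz, Complex.norm_def, Complex.normSq_add_mul_I, hsq, Real.sqrt_one]
  have hzne : z ≠ 0 := by
    intro hc; rw [hc] at habs; simp at habs
  have hcos : Real.cos z.arg = x 0 - 1 := by
    rw [Complex.cos_arg hzne, habs]; simp [hz]
  have hsin : Real.sin z.arg = x 2 := by
    rw [Complex.sin_arg, habs]; simp [hz]
  refine ⟨z.arg, ?_⟩
  funext i
  fin_cases i <;>
    simp [Matrix.cons_val_zero, Matrix.cons_val_one, Matrix.head_cons, hcos, hsin, him]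

lemma Fmap_C1 (s : ℝ) :
    Fmap (WithLp.toLp 2 ![Real.cos s, Real.sin s, 0]) = ↑(-Real.cos s) + ↑(Real.sin s) * Complex.I := by
  unfold Fmap
  have h2 : (WithLp.toLp 2 ![Real.cos s, Real.sin s, 0] : E3) 2 = 0 := rfl
  have h0 : (WithLp.toLp 2 ![Real.cos s, Real.sin s, 0] : E3) 0 = Real.cos s := rfl
  have h1 : (WithLp.toLp 2 ![Real.cos s, Real.sin s, 0] : E3) 1 = Real.sin s := rfl
  rw [h0, h1, h2]
  congr 2
  rw [show (Real.cos s - 1)^2 + (0:ℝ)^2 = (Real.cos s - 1)^2 by ring,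
    Real.sqrt_sq_eq_abs, abs_of_nonpos (by linarith [Real.cos_le_one s])]
  ring

lemma dist_e2 (x y : E2) :
    dist x y = Real.sqrt ((x 0 - y 0)^2 + (x 1 - y 1)^2) := by
  rw [EuclideanSpace.dist_eq]
  congr 1
  rw [Fin.sum_univ_two]
  simp [Real.dist_eq, sq_abs]

lemma norm_e2 (x : E2) : ‖x‖ = Real.sqrt ((x 0)^2 + (x 1)^2) := by
  rw [EuclideanSpace.norm_eq]
  congr 1
  rw [Fin.sum_univ_two]
  simp [Real.norm_eq_abs, sq_abs]

lemma P_mem (t s : ℝ) (ht : |t| ≤ 1) : (WithLp.toLp 2 ![t * Real.cos s, t * Real.sin s] : E2) ∈ D2 := by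
  rw [D2]
  refine mem_closedBall_zero_iff.mpr ?_
  rw [norm_e2]
  have h0 : (WithLp.toLp 2 ![t * Real.cos s, t * Real.sin s] : E2) 0 = t * Real.cos s := rfl
  have h1 : (WithLp.toLp 2 ![t * Real.cos s, t * Real.sin s] : E2) 1 = t * Real.sin s := rfl
  rw [h0, h1]
  have key : (t * Real.cos s)^2 + (t * Real.sin s)^2 = t^2 := by
    nlinarith [Real.sin_sq_add_cos_sq s]
  rw [key, Real.sqrt_sq_eq_abs]
  exact ht

lemma P_cont (t : ℝ) : Continuous fun s : ℝ => (WithLp.toLp 2 ![t * Real.cos s, t * Real.sin s] : E2) := by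
  apply (PiLp.continuous_toLp 2 _).comp
  apply continuous_pi
  intro i
  fin_cases i
  · show Continuous fun s : ℝ => t * Real.cos s
    fun_prop
  · show Continuous fun s : ℝ => t * Real.sin s
    fun_prop

/-- Every (possibly singular) disk spanning one component of a Hopf link must
intersect the other component. -/
theorem spanning_disk_meets_other_component
    (h : E3 ≃ₜ E3) (γ₁ γ₂ : Set E3) (hγ₁ : γ₁ = h '' C1) (hγ₂ : γ₂ = h '' C2)
    (g : E2 → E3) (hg : ContinuousOn g D2)
    (hbd : ∀ s : ℝ, g (WithLp.toLp 2 ![Real.cos s, Real.sin s]) = h (WithLp.toLp 2 ![Real.cos s, Real.sin s, 0])) :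
    (g '' D2 ∩ γ₂).Nonempty := by
  by_contra hne
  rw [Set.not_nonempty_iff_eq_empty] at hne
  have two_pi_pos : (0:ℝ) < 2 * Real.pi := by positivity
  -- the complement map composed with the disk
  set G : E2 → ℂ := fun p => Fmap (h.symm (g p)) with hG
  have hGc : ContinuousOn G D2 :=
    Fmap_cont.comp_continuousOn (h.symm.continuous.comp_continuousOn hg)
  have hGne : ∀ p ∈ D2, G p ≠ 0 := by
    intro p hp
    apply Fmap_ne_zero
    intro hmem
    have h1 : g p ∈ γ₂ := by
      rw [hγ₂]
      exact ⟨h.symm (g p), hmem, h.apply_symm_apply _⟩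
    have h2 : g p ∈ g '' D2 ∩ γ₂ := ⟨⟨p, hp, rfl⟩, h1⟩
    rw [hne] at h2
    exact h2
  -- minimum modulus
  have hD2c : IsCompact D2 := isCompact_closedBall 0 1
  have hD2ne : D2.Nonempty := ⟨0, Metric.mem_closedBall_self zero_le_one⟩
  obtain ⟨p₀, hp₀, hmin⟩ := hD2c.exists_isMinOn hD2ne (continuous_norm.comp_continuousOn hGc)
  set c : ℝ := ‖G p₀‖ with hcdef
  have hc : 0 < c := norm_pos_iff.mpr (hGne p₀ hp₀)
  have hcle : ∀ p ∈ D2, c ≤ ‖G p‖ := fun p hp => isMinOn_iff.mp hmin p hp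
  -- uniform continuity
  have huc := hD2c.uniformContinuousOn_of_continuous hGc
  rw [Metric.uniformContinuousOn_iff] at huc
  obtain ⟨δ, hδ, hδc⟩ := huc c hc
  -- the family of concentric loops
  set P : ℝ → ℝ → E2 := fun t s => WithLp.toLp 2 ![t * Real.cos s, t * Real.sin s] with hP
  have hPmem : ∀ t ∈ Icc (0:ℝ) 1, ∀ s : ℝ, P t s ∈ D2 := by
    intro t ht s
    exact P_mem t s (abs_le.mpr ⟨by linarith [ht.1], ht.2⟩)
  set H : ℝ → ℝ → ℂ := fun t s => G (P t s) with hHdef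
  have hHcont : ∀ t ∈ Icc (0:ℝ) 1, Continuous (H t) := fun t ht =>
    hGc.comp_continuous (P_cont t) (fun s => hPmem t ht s)
  have hHne : ∀ t ∈ Icc (0:ℝ) 1, ∀ s, c ≤ ‖H t s‖ := fun t ht s => hcle _ (hPmem t ht s)
  have hHne0 : ∀ t ∈ Icc (0:ℝ) 1, ∀ s, H t s ≠ 0 := fun t ht s => hGne _ (hPmem t ht s)
  have hsqrt2 : Real.sqrt 2 < 2 := by
    nlinarith [Real.sq_sqrt (by norm_num : (0:ℝ) ≤ 2), Real.sqrt_nonneg 2]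
  -- modulus in the angular direction
  have hmod : ∀ t ∈ Icc (0:ℝ) 1, ∀ u v : ℝ, |u - v| ≤ δ/2 → ‖H t u - H t v‖ < c := by
    intro t ht u v huv
    have habs_t : |t| ≤ 1 := abs_le.mpr ⟨by linarith [ht.1], ht.2⟩
    have hd : dist (P t u) (P t v) < δ := by
      rw [dist_e2]
      have e0 : P t u 0 - P t v 0 = t * (Real.cos u - Real.cos v) := by
        show t * Real.cos u - t * Real.cos v = _; ring
      have e1 : P t u 1 - P t v 1 = t * (Real.sin u - Real.sin v) := by
        show t * Real.sin u - t * Real.sin v = _; ring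
      rw [e0, e1]
      have hb0 : |t * (Real.cos u - Real.cos v)| ≤ |u - v| := by
        rw [abs_mul]
        calc |t| * |Real.cos u - Real.cos v| ≤ 1 * |u - v| :=
          mul_le_mul habs_t (HL.cos_lip u v) (abs_nonneg _) zero_le_one
        _ = |u - v| := one_mul _
      have hb1 : |t * (Real.sin u - Real.sin v)| ≤ |u - v| := by
        rw [abs_mul]
        calc |t| * |Real.sin u - Real.sin v| ≤ 1 * |u - v| :=
          mul_le_mul habs_t (HL.sin_lip u v) (abs_nonneg _) zero_le_one
        _ = |u - v| := one_mul _
      calc Real.sqrt ((t * (Real.cos u - Real.cos v))^2 + (t * (Real.sin u - Real.sin v))^2)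
          ≤ Real.sqrt (2 * (u - v)^2) := by
            apply Real.sqrt_le_sqrt
            nlinarith [_root_.sq_abs (t * (Real.cos u - Real.cos v)),
              _root_.sq_abs (t * (Real.sin u - Real.sin v)), _root_.sq_abs (u - v),
              abs_nonneg (t * (Real.cos u - Real.cos v)),
              abs_nonneg (t * (Real.sin u - Real.sin v)), abs_nonneg (u - v)]
        _ = Real.sqrt 2 * |u - v| := by
            rw [Real.sqrt_mul (by norm_num) ((u - v)^2), Real.sqrt_sq_eq_abs]
        _ < δ := by nlinarith [Real.sqrt_nonneg 2, abs_nonneg (u - v)]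
    have hdist := hδc _ (hPmem t ht u) _ (hPmem t ht v) hd
    rwa [dist_eq_norm] at hdist
  -- continuous logarithms along each loop
  have hex : ∀ t, t ∈ Icc (0:ℝ) 1 → ∃ L : ℝ → ℂ, Continuous L ∧
      ∀ s ∈ Icc 0 (2*Real.pi), Complex.exp (L s) = H t s := fun t ht =>
    HL.exists_exp_lift (H t) (hHcont t ht) c (δ/2) (2*Real.pi) hc (by linarith)
      (le_of_lt two_pi_pos) (hHne t ht) (hmod t ht)
  choose L hLc hLe using hex
  -- nearby loops have the same winding increment
  have hstep : ∀ t₀, ∀ ht₀ : t₀ ∈ Icc (0:ℝ) 1, ∀ t, ∀ ht : t ∈ Icc (0:ℝ) 1, |t - t₀| < δ →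
      L t ht (2*Real.pi) - L t ht 0 = L t₀ ht₀ (2*Real.pi) - L t₀ ht₀ 0 := by
    intro t₀ ht₀ t ht htt
    have hclose : ∀ s : ℝ, ‖H t s - H t₀ s‖ < c := by
      intro s
      have hd : dist (P t s) (P t₀ s) < δ := by
        rw [dist_e2]
        have e2 : (P t s 0 - P t₀ s 0)^2 + (P t s 1 - P t₀ s 1)^2 = (t - t₀)^2 := by
          show (t * Real.cos s - t₀ * Real.cos s)^2 + (t * Real.sin s - t₀ * Real.sin s)^2 = _
          nlinarith [Real.sin_sq_add_cos_sq s]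
        rw [e2, Real.sqrt_sq_eq_abs]
        exact htt
      have hdist := hδc _ (hPmem t ht s) _ (hPmem t₀ ht₀ s) hd
      rwa [dist_eq_norm] at hdist
    have hrs : ∀ s : ℝ, H t s / H t₀ s ∈ Complex.slitPlane ∧ H t s / H t₀ s ≠ 0 :=
      fun s => HL.ratio_facts _ _ (hHne0 t₀ ht₀ s) ((hclose s).trans_le (hHne t₀ ht₀ s))
    set L' : ℝ → ℂ := fun s => L t₀ ht₀ s + Complex.log (H t s / H t₀ s) with hL'
    have hL'c : Continuous L' := by
      apply (hLc t₀ ht₀).add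
      rw [continuous_iff_continuousAt]
      intro s
      have hcontr : Continuous fun a : ℝ => H t a / H t₀ a :=
        (hHcont t ht).div (hHcont t₀ ht₀) (hHne0 t₀ ht₀)
      show ContinuousAt (Complex.log ∘ fun a : ℝ => H t a / H t₀ a) s
      exact ContinuousAt.comp (continuousAt_clog (hrs s).1) hcontr.continuousAt
    have hL'e : ∀ s ∈ Icc (0:ℝ) (2*Real.pi), Complex.exp (L' s) = H t s := by
      intro s hs
      rw [hL']
      simp only
      rw [Complex.exp_add, hLe t₀ ht₀ s hs, Complex.exp_log (hrs s).2, mul_comm]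
      exact div_mul_cancel₀ _ (hHne0 t₀ ht₀ s)
    have huniq := HL.exp_lift_unique (2*Real.pi) (le_of_lt two_pi_pos) (L t ht) L'
      (hLc t ht) hL'c
      (fun s hs => by rw [hLe t ht s hs, hL'e s hs])
    rw [huniq, hL']
    simp only
    have hPper : ∀ τ : ℝ, P τ (2*Real.pi) = P τ 0 := by
      intro τ
      rw [hP]
      simp [Real.cos_two_pi, Real.sin_two_pi]
    have h1 : H t (2*Real.pi) = H t 0 := by rw [hHdef]; simp only; rw [hPper t]
    have h2 : H t₀ (2*Real.pi) = H t₀ 0 := by rw [hHdef]; simp only; rw [hPper t₀]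
    rw [h1, h2]
    ring
  -- chain from the center to the boundary
  have h0mem : (0:ℝ) ∈ Icc (0:ℝ) 1 := ⟨le_refl 0, zero_le_one⟩
  have h1mem : (1:ℝ) ∈ Icc (0:ℝ) 1 := ⟨zero_le_one, le_refl 1⟩
  obtain ⟨N', hN'⟩ := exists_nat_gt (1/δ)
  set N : ℕ := N' + 1 with hN
  have hNpos : (0:ℝ) < N := by positivity
  have hINδ : 1/(N:ℝ) < δ := by
    rw [div_lt_iff₀ hNpos]
    have h1 : 1/δ < N := hN'.trans_le (by exact_mod_cast Nat.le_succ N')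
    have h2 : (1/δ)*δ = 1 := by field_simp
    nlinarith
  have hkmem : ∀ k : ℕ, k ≤ N → ((k:ℝ)/N) ∈ Icc (0:ℝ) 1 := by
    intro k hk
    constructor
    · positivity
    · rw [div_le_one hNpos]; exact_mod_cast hk
  have hchain : ∀ k : ℕ, ∀ hk : k ≤ N,
      L ((k:ℝ)/N) (hkmem k hk) (2*Real.pi) - L ((k:ℝ)/N) (hkmem k hk) 0 =
      L 0 h0mem (2*Real.pi) - L 0 h0mem 0 := by
    intro k
    induction k with
    | zero =>
      intro hk
      apply hstep 0 h0mem
      simp [hNpos.ne']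
      exact hδ
    | succ k ih =>
      intro hk
      have hk' : k ≤ N := Nat.le_of_succ_le hk
      rw [← ih hk']
      apply hstep ((k:ℝ)/N) (hkmem k hk')
      have : ((k+1:ℕ):ℝ)/N - (k:ℝ)/N = 1/N := by push_cast; field_simp; ring
      rw [this]
      rw [abs_of_pos (by positivity)]
      exact hINδ
  -- the total increment at t = 1 equals the increment at t = 0
  have hNN : ((N:ℝ))/N = 1 := div_self hNpos.ne'
  have hfinal : L 1 h1mem (2*Real.pi) - L 1 h1mem 0 = L 0 h0mem (2*Real.pi) - L 0 h0mem 0 := by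
    rw [← hchain N le_rfl]
    apply hstep ((N:ℝ)/N) (hkmem N le_rfl)
    rw [hNN]
    simpa using hδ
  -- increment at t = 0 is zero
  have hW0 : L 0 h0mem (2*Real.pi) - L 0 h0mem 0 = 0 := by
    have hPconst : ∀ s : ℝ, P 0 s = P 0 0 := by
      intro s
      rw [hP]
      simp
    have hconste : ∀ s ∈ Icc (0:ℝ) (2*Real.pi),
        Complex.exp ((fun _ : ℝ => Complex.log (H 0 0)) s) = Complex.exp (L 0 h0mem s) := by
      intro s hs
      rw [hLe 0 h0mem s hs]
      simp only
      rw [Complex.exp_log (hHne0 0 h0mem 0)]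
      rw [hHdef]
      simp only
      rw [hPconst s]
    have := HL.exp_lift_unique (2*Real.pi) (le_of_lt two_pi_pos)
      (fun _ : ℝ => Complex.log (H 0 0)) (L 0 h0mem) continuous_const (hLc 0 h0mem) hconste
    rw [← this]
    ring
  -- increment at t = 1 is -2πi
  have hH1 : ∀ s : ℝ, H 1 s = ↑(-Real.cos s) + ↑(Real.sin s) * Complex.I := by
    intro s
    rw [hHdef]
    simp only
    have hP1 : P 1 s = WithLp.toLp 2 ![Real.cos s, Real.sin s] := by
      rw [hP]; simp
    rw [hP1, hG]
    simp only
    rw [hbd s, h.symm_apply_apply, Fmap_C1]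
  have hW1 : L 1 h1mem (2*Real.pi) - L 1 h1mem 0 =
      (↑(Real.pi - 2*Real.pi) : ℂ) * Complex.I - (↑Real.pi : ℂ) * Complex.I := by
    have hLe1 : ∀ s ∈ Icc (0:ℝ) (2*Real.pi),
        Complex.exp (L 1 h1mem s) = Complex.exp ((fun s : ℝ => (↑(Real.pi - s) : ℂ) * Complex.I) s) := by
      intro s hs
      rw [hLe 1 h1mem s hs, hH1 s]
      simp only
      rw [Complex.exp_mul_I, ← Complex.ofReal_cos, ← Complex.ofReal_sin,
        Real.cos_pi_sub, Real.sin_pi_sub]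
    have hcont : Continuous fun s : ℝ => (↑(Real.pi - s) : ℂ) * Complex.I := by fun_prop
    have := HL.exp_lift_unique (2*Real.pi) (le_of_lt two_pi_pos) (L 1 h1mem)
      (fun s : ℝ => (↑(Real.pi - s) : ℂ) * Complex.I) (hLc 1 h1mem) hcont hLe1
    rw [this]
    norm_num
  rw [hW1, hW0] at hfinal
  have : ((-2*Real.pi : ℝ) : ℂ) * Complex.I = 0 := by
    rw [← hfinal]; push_cast; ring
  rcases mul_eq_zero.mp this with hc0 | hc0
  · rw [Complex.ofReal_eq_zero] at hc0
    exact Real.pi_ne_zero (by linarith)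
  · exact Complex.I_ne_zero hc0
end
end
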